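/- For 2 ≤ P ≤ X and any s with Re(s) = 1/2 + 1/log X, one has ∑_{P ≤ p ≤ 2P} p^{-s} = ∫_{1/log X}^{1/2} (∑_{P ≤ n ≤ 2P} Λ(n) n^{-(1/2 + α + i·Im s)}) dα + O(1), where the sum on the left is over primes and Λ is the von Mangoldt function. -/

import Mathlib

open Real Complex MeasureTheory Finset
open scoped ArithmeticFunction

lemma my_integral_cpow {n : ℕ} (hn : 2 ≤ n) (t a b : ℝ) :
    ∫ α in a..b, (n : ℂ) ^ (-((1/2 : ℂ) + (α : ℂ) + Complex.I * t)) =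
      ((Real.log n : ℂ))⁻¹ *
        ((n : ℂ) ^ (-((1/2 : ℂ) + (a : ℂ) + Complex.I * t)) -
         (n : ℂ) ^ (-((1/2 : ℂ) + (b : ℂ) + Complex.I * t))) := by
  have hn0 : (0:ℝ) < n := by positivity
  have hlog : (0:ℝ) < Real.log n := Real.log_pos (by exact_mod_cast hn)
  set L : ℂ := (Real.log n : ℂ) with hLdef
  have hL : L ≠ 0 := by
    simp only [hLdef, ne_eq, Complex.ofReal_eq_zero]; exact hlog.ne'
  have hne : (n : ℂ) ≠ 0 := by exact_mod_cast hn0.ne'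
  have hcp : ∀ α : ℝ, (n : ℂ) ^ (-((1/2 : ℂ) + (α : ℂ) + Complex.I * t))
      = Complex.exp (L * (-((1/2 : ℂ) + (α : ℂ) + Complex.I * t))) := by
    intro α
    rw [Complex.cpow_def_of_ne_zero hne, ← Complex.natCast_log]
  have hderiv : ∀ α : ℝ, HasDerivAt
      (fun β : ℝ => -L⁻¹ * Complex.exp (L * (-((1/2 : ℂ) + (β : ℂ) + Complex.I * t))))
      (Complex.exp (L * (-((1/2 : ℂ) + (α : ℂ) + Complex.I * t)))) α := by
    intro α
    have h1 : HasDerivAt (fun β : ℝ => L * (-((1/2 : ℂ) + (β : ℂ) + Complex.I * t))) (-L) α := by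
      have : HasDerivAt (fun β : ℝ => ((β : ℂ))) 1 α := (hasDerivAt_id α).ofReal_comp
      have h2 := ((this.const_add ((1/2:ℂ))).add_const (Complex.I * t)).neg.const_mul L
      simpa using h2
    have := (h1.cexp).const_mul (-L⁻¹)
    convert this using 1
    · rfl
    field_simp
  have hcont : Continuous fun α : ℝ =>
      Complex.exp (L * (-((1/2 : ℂ) + (α : ℂ) + Complex.I * t))) := by
    fun_prop
  have key := intervalIntegral.integral_eq_sub_of_hasDerivAt
    (f := fun β : ℝ => -L⁻¹ * Complex.exp (L * (-((1/2 : ℂ) + (β : ℂ) + Complex.I * t))))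
    (fun x _ => hderiv x) (hcont.intervalIntegrable a b)
  calc ∫ α in a..b, (n : ℂ) ^ (-((1/2 : ℂ) + (α : ℂ) + Complex.I * t))
      = ∫ α in a..b, Complex.exp (L * (-((1/2 : ℂ) + (α : ℂ) + Complex.I * t))) := by
        simp_rw [hcp]
    _ = -L⁻¹ * Complex.exp (L * (-((1/2 : ℂ) + (b : ℂ) + Complex.I * t)))
        - -L⁻¹ * Complex.exp (L * (-((1/2 : ℂ) + (a : ℂ) + Complex.I * t))) := key
    _ = L⁻¹ * (Complex.exp (L * (-((1/2 : ℂ) + (a : ℂ) + Complex.I * t)))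
        - Complex.exp (L * (-((1/2 : ℂ) + (b : ℂ) + Complex.I * t)))) := by ring
    _ = _ := by rw [hcp a, hcp b]

lemma my_recover {n : ℕ} (hnp : ¬ n.Prime) (h : IsPrimePow n) (hsq : ¬ IsSquare n) :
    (Nat.sqrt (n / n.minFac)).minFac * (Nat.sqrt (n / n.minFac)) ^ 2 = n ∧
      Nat.sqrt (n / n.minFac) ^ 2 ≤ n := by
  obtain ⟨p, k, hp, hk, rfl⟩ := h
  rw [Nat.prime_iff.symm] at hp
  have hk2 : 2 ≤ k := by
    match k, hk with
    | 1, _ => simp only [pow_one] at hnp; exact absurd hp hnp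
    | (n+2), _ => omega
  have hkodd : k % 2 = 1 := by
    rcases Nat.even_or_odd k with he | ho
    · obtain ⟨j, rfl⟩ := he
      exact absurd ⟨p ^ j, by rw [← pow_add]⟩ hsq
    · exact Nat.odd_iff.mp ho
  obtain ⟨j, hj⟩ : ∃ j, k = 2 * j + 1 := ⟨k / 2, by omega⟩
  have hj1 : 1 ≤ j := by omega
  subst hj
  have hmf : (p ^ (2 * j + 1)).minFac = p := hp.pow_minFac (by omega)
  have hdiv : p ^ (2 * j + 1) / p = (p ^ j) ^ 2 := by
    rw [pow_succ, Nat.mul_div_cancel _ hp.pos, ← pow_mul, mul_comm]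
  rw [hmf, hdiv, Nat.sqrt_eq']
  constructor
  · have : (p ^ j).minFac = p := hp.pow_minFac (by omega)
    rw [this, ← pow_mul, ← pow_succ']
    ring
  · calc (p ^ j) ^ 2 = p ^ (2 * j) := by rw [← pow_mul, mul_comm]
      _ ≤ p ^ (2 * j + 1) := Nat.pow_le_pow_right hp.pos (by omega)

lemma my_card_le (N : ℕ) (T : Finset ℕ)
    (hT : ∀ n ∈ T, n ≤ N ∧ ¬ n.Prime ∧ IsPrimePow n) :
    T.card ≤ 2 * Nat.sqrt N + 2 := by
  classical
  have := Finset.card_le_card_of_injOn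
    (f := fun n => if IsSquare n then 2 * Nat.sqrt n else 2 * Nat.sqrt (n / n.minFac) + 1)
    (s := T) (t := Finset.range (2 * Nat.sqrt N + 2)) ?_ ?_
  · simpa using this
  · intro n hn
    obtain ⟨hN, hnp, hpp⟩ := hT n hn
    simp only [Finset.coe_range, Set.mem_Iio]
    split_ifs with hsq
    · have := Nat.sqrt_le_sqrt hN
      omega
    · have h1 := (my_recover hnp hpp hsq).2
      have : Nat.sqrt (n / n.minFac) ≤ Nat.sqrt N :=
        Nat.sqrt_le_sqrt (Nat.div_le_self n _ |>.trans hN)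
      omega
  · intro n hn m hm hnm
    obtain ⟨_, hnp, hppn⟩ := hT n hn
    obtain ⟨_, hmp, hppm⟩ := hT m hm
    simp only at hnm
    by_cases hsn : IsSquare n <;> by_cases hsm : IsSquare m <;>
      simp only [hsn, hsm, if_pos, if_neg, if_true, if_false] at hnm
    · obtain ⟨r, hr⟩ := hsn
      obtain ⟨u, hu⟩ := hsm
      have h1 : Nat.sqrt n = Nat.sqrt m := by omega
      rw [hr, hu, Nat.sqrt_eq, Nat.sqrt_eq] at h1
      rw [hr, hu, h1]
    · omega
    · omega
    · have h1 : Nat.sqrt (n / n.minFac) = Nat.sqrt (m / m.minFac) := by omega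
      have e1 := (my_recover hnp hppn hsn).1
      have e2 := (my_recover hmp hppm hsm).1
      rw [← e1, ← e2, h1]

/-- The sum over primes `P ≤ p ≤ 2P` of `p^{-s}` with `Re s = 1/2 + 1/log X` equals the
integral over `α ∈ [1/log X, 1/2]` of the von Mangoldt Dirichlet polynomial, up to `O(1)`. -/
theorem prime_sum_integral_identity :
    ∃ C : ℝ, 0 < C ∧ ∀ (P X : ℝ), 2 ≤ P → P ≤ X → ∀ s : ℂ,
      s.re = 1 / 2 + 1 / Real.log X →
      ‖(∑ p ∈ (Finset.Icc ⌈P⌉₊ ⌊2 * P⌋₊).filter Nat.Prime, (p : ℂ) ^ (-s))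
        - ∫ α in (1 / Real.log X)..(1 / 2 : ℝ),
            ∑ n ∈ Finset.Icc ⌈P⌉₊ ⌊2 * P⌋₊,
              ((Λ n : ℝ) : ℂ) * (n : ℂ) ^ (-((1 / 2 : ℂ) + (α : ℂ) + Complex.I * s.im))‖
      ≤ C := by
  classical
  refine ⟨20, by norm_num, ?_⟩
  intro P X hP2 hPX s hs
  set t : ℝ := s.im with ht
  set a : ℝ := 1 / Real.log X with ha'
  set I' : Finset ℕ := Finset.Icc ⌈P⌉₊ ⌊2 * P⌋₊ with hI'
  have hX2 : (2:ℝ) ≤ X := le_trans hP2 hPX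
  have hlogX : 0 < Real.log X := Real.log_pos (by linarith)
  have ha0 : 0 < a := by rw [ha']; positivity
  have hP0 : (0:ℝ) < P := by linarith
  have hceil2 : 2 ≤ ⌈P⌉₊ := by
    have h := Nat.ceil_le_ceil (R := ℝ) hP2
    simpa using h
  have hmem2 : ∀ n ∈ I', 2 ≤ n := fun n hn => le_trans hceil2 (Finset.mem_Icc.mp hn).1
  have hmemP : ∀ n ∈ I', P ≤ (n:ℝ) := fun n hn =>
    le_trans (Nat.le_ceil P) (Nat.cast_le.mpr (Finset.mem_Icc.mp hn).1)
  have hmem1 : ∀ n ∈ I', (1:ℝ) ≤ (n:ℝ) := fun n hn => by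
    have h := hmem2 n hn
    exact_mod_cast Nat.one_le_cast.mpr (by omega)
  -- norm of the basic term
  have hEnorm : ∀ (n : ℕ), 2 ≤ n → ∀ α : ℝ,
      ‖(n:ℂ) ^ (-((1/2 : ℂ) + (α : ℂ) + Complex.I * (t:ℂ)))‖ = (n:ℝ) ^ (-(1/2 + α)) := by
    intro n hn α
    rw [Complex.norm_natCast_cpow_of_pos (by omega)]
    congr 1
    simp
  -- integrability
  have hint : ∀ n ∈ I', IntervalIntegrable
      (fun α : ℝ => ((Λ n : ℝ) : ℂ) * (n:ℂ) ^ (-((1/2 : ℂ) + (α : ℂ) + Complex.I * (t:ℂ))))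
      volume a (1/2 : ℝ) := by
    intro n hn
    have hne : (n:ℂ) ≠ 0 := Nat.cast_ne_zero.mpr (by have := hmem2 n hn; omega)
    exact (continuous_const.mul
      (Continuous.const_cpow (by fun_prop) (Or.inl hne))).intervalIntegrable _ _
  rw [intervalIntegral.integral_finset_sum hint]
  have hterm : ∀ n ∈ I',
      (∫ α in a..(1/2:ℝ), ((Λ n : ℝ) : ℂ) * (n:ℂ) ^ (-((1/2 : ℂ) + (α : ℂ) + Complex.I * (t:ℂ))))
        = ((Λ n : ℝ) : ℂ) * (((Real.log n : ℂ))⁻¹ *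
            ((n:ℂ) ^ (-((1/2 : ℂ) + (a : ℂ) + Complex.I * (t:ℂ)))
              - (n:ℂ) ^ (-((1/2 : ℂ) + (((1/2 : ℝ)) : ℂ) + Complex.I * (t:ℂ))))) := by
    intro n hn
    rw [intervalIntegral.integral_const_mul, my_integral_cpow (hmem2 n hn)]
  rw [Finset.sum_congr rfl hterm]
  -- rewrite -s as the exponent at α = a
  have hseq : -s = -((1/2 : ℂ) + (a:ℂ) + Complex.I * (t:ℂ)) := by
    have hse : s = (1/2 : ℂ) + (a:ℂ) + Complex.I * (t:ℂ) := by
      apply Complex.ext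
      · simp [hs]
      · simp [ht]
    rw [← hse]
  rw [hseq]
  rw [← Finset.sum_filter_add_sum_filter_not I' Nat.Prime]
  have hprime : ∀ p ∈ I'.filter Nat.Prime,
      ((Λ p : ℝ):ℂ) * (((Real.log p : ℂ))⁻¹ *
          ((p:ℂ) ^ (-((1/2 : ℂ) + (a:ℂ) + Complex.I * (t:ℂ)))
            - (p:ℂ) ^ (-((1/2 : ℂ) + (((1/2 : ℝ)) : ℂ) + Complex.I * (t:ℂ)))))
        = ((p:ℂ) ^ (-((1/2 : ℂ) + (a:ℂ) + Complex.I * (t:ℂ)))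
            - (p:ℂ) ^ (-((1/2 : ℂ) + (((1/2 : ℝ)) : ℂ) + Complex.I * (t:ℂ)))) := by
    intro p hp
    obtain ⟨hpI, hpp⟩ := Finset.mem_filter.mp hp
    rw [ArithmeticFunction.vonMangoldt_apply_prime hpp]
    have hlp : (0:ℝ) < Real.log p := Real.log_pos (by exact_mod_cast hpp.one_lt)
    have : (Real.log p : ℂ) ≠ 0 := Complex.ofReal_ne_zero.mpr hlp.ne'
    rw [← mul_assoc, mul_inv_cancel₀ this, one_mul]
  rw [Finset.sum_congr rfl hprime, Finset.sum_sub_distrib,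
    show ∀ A D C : ℂ, A - (A - D + C) = D - C from fun A D C => by ring]
  refine le_trans (norm_sub_le _ _) ?_
  have hsqrtP1 : (1:ℝ) ≤ Real.sqrt P := by
    nlinarith [Real.sq_sqrt hP0.le, Real.sqrt_nonneg P]
  have hsqrtP0 : (0:ℝ) < Real.sqrt P := lt_of_lt_of_le one_pos hsqrtP1
  have hsqrt2 : Real.sqrt 2 ≤ 2 := by
    nlinarith [Real.sq_sqrt (by norm_num : (0:ℝ) ≤ 2), Real.sqrt_nonneg 2]
  -- Bound 1 : prime sum of n^{-1}
  have hbound1 : ‖∑ p ∈ I'.filter Nat.Prime,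
      (p:ℂ) ^ (-((1/2 : ℂ) + (((1/2 : ℝ)) : ℂ) + Complex.I * (t:ℂ)))‖ ≤ 2 := by
    have hcard : ((I'.filter Nat.Prime).card : ℝ) ≤ 2 * P := by
      have h1 : (I'.filter Nat.Prime).card ≤ I'.card := Finset.card_filter_le _ _
      have h2 : I'.card = ⌊2*P⌋₊ + 1 - ⌈P⌉₊ := Nat.card_Icc _ _
      have h3 : (I'.filter Nat.Prime).card ≤ ⌊2*P⌋₊ := by omega
      have h4 : ((⌊2*P⌋₊:ℕ) : ℝ) ≤ 2*P := Nat.floor_le (by positivity)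
      exact le_trans (by exact_mod_cast h3) h4
    calc ‖∑ p ∈ I'.filter Nat.Prime,
        (p:ℂ) ^ (-((1/2 : ℂ) + (((1/2 : ℝ)) : ℂ) + Complex.I * (t:ℂ)))‖
        ≤ ∑ p ∈ I'.filter Nat.Prime,
          ‖(p:ℂ) ^ (-((1/2 : ℂ) + (((1/2 : ℝ)) : ℂ) + Complex.I * (t:ℂ)))‖ :=
        norm_sum_le _ _
      _ ≤ ∑ _p ∈ I'.filter Nat.Prime, 1/P := by
          refine Finset.sum_le_sum fun p hp => ?_
          have hpI := (Finset.mem_filter.mp hp).1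
          rw [hEnorm p (hmem2 p hpI)]
          rw [show (-(1/2 + 1/2) : ℝ) = -1 by norm_num, Real.rpow_neg_one, one_div]
          exact inv_anti₀ hP0 (hmemP p hpI)
      _ = ((I'.filter Nat.Prime).card : ℝ) * (1/P) := by
          rw [Finset.sum_const, nsmul_eq_mul]
      _ ≤ (2*P) * (1/P) := by
          apply mul_le_mul_of_nonneg_right hcard (by positivity)
      _ = 2 := by field_simp
  -- Bound 2 : prime power sum
  have hbound2 : ‖∑ n ∈ I'.filter (fun n => ¬ n.Prime),
      ((Λ n : ℝ):ℂ) * (((Real.log n : ℂ))⁻¹ *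
          ((n:ℂ) ^ (-((1/2 : ℂ) + (a:ℂ) + Complex.I * (t:ℂ)))
            - (n:ℂ) ^ (-((1/2 : ℂ) + (((1/2 : ℝ)) : ℂ) + Complex.I * (t:ℂ)))))‖ ≤ 18 := by
    set S : Finset ℕ :=
      (I'.filter (fun n => ¬ n.Prime)).filter (fun n => Λ n ≠ 0) with hS
    have hsum_eq : ∑ n ∈ I'.filter (fun n => ¬ n.Prime),
        ((Λ n : ℝ):ℂ) * (((Real.log n : ℂ))⁻¹ *
            ((n:ℂ) ^ (-((1/2 : ℂ) + (a:ℂ) + Complex.I * (t:ℂ)))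
              - (n:ℂ) ^ (-((1/2 : ℂ) + (((1/2 : ℝ)) : ℂ) + Complex.I * (t:ℂ)))))
        = ∑ n ∈ S,
          ((Λ n : ℝ):ℂ) * (((Real.log n : ℂ))⁻¹ *
              ((n:ℂ) ^ (-((1/2 : ℂ) + (a:ℂ) + Complex.I * (t:ℂ)))
                - (n:ℂ) ^ (-((1/2 : ℂ) + (((1/2 : ℝ)) : ℂ) + Complex.I * (t:ℂ))))) := by
      rw [hS]
      refine (Finset.sum_filter_of_ne ?_).symm
      intro x _ hx
      intro hΛ
      apply hx
      rw [hΛ]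
      simp
    rw [hsum_eq]
    have hScard : (S.card : ℝ) ≤ 2 * Real.sqrt (2*P) + 2 := by
      have h1 : S.card ≤ 2 * Nat.sqrt ⌊2*P⌋₊ + 2 := by
        apply my_card_le ⌊2*P⌋₊
        intro n hn
        rw [hS] at hn
        obtain ⟨hn1, hn2⟩ := Finset.mem_filter.mp hn
        obtain ⟨hn3, hn4⟩ := Finset.mem_filter.mp hn1
        exact ⟨(Finset.mem_Icc.mp hn3).2, hn4,
          ArithmeticFunction.vonMangoldt_ne_zero_iff.mp hn2⟩
      have h2 : ((Nat.sqrt ⌊2*P⌋₊ : ℕ) : ℝ) ≤ Real.sqrt (2*P) := by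
        refine le_trans Real.nat_sqrt_le_real_sqrt ?_
        exact Real.sqrt_le_sqrt (Nat.floor_le (by positivity))
      calc (S.card : ℝ) ≤ ((2 * Nat.sqrt ⌊2*P⌋₊ + 2 : ℕ) : ℝ) := by exact_mod_cast h1
        _ = 2 * ((Nat.sqrt ⌊2*P⌋₊ : ℕ) : ℝ) + 2 := by push_cast; ring
        _ ≤ 2 * Real.sqrt (2*P) + 2 := by linarith
    have hterm_bound : ∀ n ∈ S,
        ‖((Λ n : ℝ):ℂ) * (((Real.log n : ℂ))⁻¹ *
            ((n:ℂ) ^ (-((1/2 : ℂ) + (a:ℂ) + Complex.I * (t:ℂ)))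
              - (n:ℂ) ^ (-((1/2 : ℂ) + (((1/2 : ℝ)) : ℂ) + Complex.I * (t:ℂ)))))‖
          ≤ 2 * (Real.sqrt P)⁻¹ := by
      intro n hn
      rw [hS] at hn
      obtain ⟨hn1, hn2⟩ := Finset.mem_filter.mp hn
      obtain ⟨hn3, _hn4⟩ := Finset.mem_filter.mp hn1
      have hn2' := hmem2 n hn3
      have hn1R : (1:ℝ) ≤ (n:ℝ) := hmem1 n hn3
      have hlogn : (0:ℝ) < Real.log n := Real.log_pos (by exact_mod_cast hn2')
      have hnorm_eq : ‖((Λ n : ℝ):ℂ) * (((Real.log n : ℂ))⁻¹ *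
            ((n:ℂ) ^ (-((1/2 : ℂ) + (a:ℂ) + Complex.I * (t:ℂ)))
              - (n:ℂ) ^ (-((1/2 : ℂ) + (((1/2 : ℝ)) : ℂ) + Complex.I * (t:ℂ)))))‖
          = (Λ n) * ((Real.log n)⁻¹ *
            ‖(n:ℂ) ^ (-((1/2 : ℂ) + (a:ℂ) + Complex.I * (t:ℂ)))
              - (n:ℂ) ^ (-((1/2 : ℂ) + (((1/2 : ℝ)) : ℂ) + Complex.I * (t:ℂ)))‖) := by
        rw [norm_mul, norm_mul, norm_inv, Complex.norm_real, Complex.norm_real,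
          Real.norm_of_nonneg ArithmeticFunction.vonMangoldt_nonneg,
          Real.norm_of_nonneg hlogn.le]
      rw [hnorm_eq]
      have hfrac : Λ n * (Real.log n)⁻¹ ≤ 1 := by
        rw [← div_eq_mul_inv]
        exact div_le_one_of_le₀ ArithmeticFunction.vonMangoldt_le_log hlogn.le
      have hEdiff : ‖(n:ℂ) ^ (-((1/2 : ℂ) + (a:ℂ) + Complex.I * (t:ℂ)))
            - (n:ℂ) ^ (-((1/2 : ℂ) + (((1/2 : ℝ)) : ℂ) + Complex.I * (t:ℂ)))‖
          ≤ 2 * (Real.sqrt P)⁻¹ := by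
        refine le_trans (norm_sub_le _ _) ?_
        rw [hEnorm n hn2', hEnorm n hn2']
        have e1 : (n:ℝ) ^ (-(1/2 + a)) ≤ (n:ℝ) ^ (-(1/2) : ℝ) :=
          Real.rpow_le_rpow_of_exponent_le hn1R (by linarith)
        have e2 : (n:ℝ) ^ (-(1/2 + 1/2) : ℝ) ≤ (n:ℝ) ^ (-(1/2) : ℝ) :=
          Real.rpow_le_rpow_of_exponent_le hn1R (by norm_num)
        have e3 : (n:ℝ) ^ (-(1/2) : ℝ) ≤ P ^ (-(1/2) : ℝ) :=
          Real.rpow_le_rpow_of_nonpos hP0 (hmemP n hn3) (by norm_num)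
        have e4 : P ^ (-(1/2) : ℝ) = (Real.sqrt P)⁻¹ := by
          rw [Real.rpow_neg hP0.le, Real.sqrt_eq_rpow]
        rw [e4] at e3
        nlinarith [e1, e2, e3]
      calc Λ n * ((Real.log n)⁻¹ * ‖_ - _‖) = (Λ n * (Real.log n)⁻¹) * ‖_ - _‖ := by ring
        _ ≤ 1 * (2 * (Real.sqrt P)⁻¹) := by
            apply mul_le_mul hfrac hEdiff (norm_nonneg _) one_pos.le
        _ = 2 * (Real.sqrt P)⁻¹ := by ring
    calc ‖∑ n ∈ S, ((Λ n : ℝ):ℂ) * (((Real.log n : ℂ))⁻¹ *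
            ((n:ℂ) ^ (-((1/2 : ℂ) + (a:ℂ) + Complex.I * (t:ℂ)))
              - (n:ℂ) ^ (-((1/2 : ℂ) + (((1/2 : ℝ)) : ℂ) + Complex.I * (t:ℂ)))))‖
        ≤ ∑ n ∈ S, ‖((Λ n : ℝ):ℂ) * (((Real.log n : ℂ))⁻¹ *
            ((n:ℂ) ^ (-((1/2 : ℂ) + (a:ℂ) + Complex.I * (t:ℂ)))
              - (n:ℂ) ^ (-((1/2 : ℂ) + (((1/2 : ℝ)) : ℂ) + Complex.I * (t:ℂ)))))‖ :=
          norm_sum_le _ _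
      _ ≤ ∑ _n ∈ S, 2 * (Real.sqrt P)⁻¹ := Finset.sum_le_sum hterm_bound
      _ = (S.card : ℝ) * (2 * (Real.sqrt P)⁻¹) := by rw [Finset.sum_const, nsmul_eq_mul]
      _ ≤ (2 * Real.sqrt (2*P) + 2) * (2 * (Real.sqrt P)⁻¹) := by
          apply mul_le_mul_of_nonneg_right hScard (by positivity)
      _ = 4 * Real.sqrt 2 + 4 * (Real.sqrt P)⁻¹ := by
          rw [Real.sqrt_mul (by norm_num : (0:ℝ) ≤ 2)]
          field_simp
          ring
      _ ≤ 18 := by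
          have h5 : (Real.sqrt P)⁻¹ ≤ 1 := by
            rw [inv_le_one_iff₀]; right; exact hsqrtP1
          nlinarith
  linarith [hbound1, hbound2]
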